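/- arXiv:1901.01611 — 2 statements merged into one kernel-verified Lean document; each statement's English description precedes it below -/
import Mathlib

section
/- Let α ∈ [0,1], β = √(1-α²), and |a⟩ = α|0⟩ + β|1⟩ in ℂ². Define operators Λ₀ = p|0⟩⟨0| and Λₐ = p|a⟩⟨a| for p > 0. Then the operator I − Λ₀ − Λₐ is positive semidefinite if and only if p ≤ 1/(1+α). -/
open scoped ComplexOrder

/-- Rank-one outer product `|v⟩⟨v|` as a matrix. -/
def outer {n : Type*} (v : n → ℂ) : Matrix n n ℂ := Matrix.of fun i j => v i * star (v j)

lemma quad (α β p : ℝ) (x : Fin 2 → ℂ) :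
    dotProduct (star x) (((1 : Matrix (Fin 2) (Fin 2) ℂ) - (p : ℂ) • outer ![1, 0]
      - (p : ℂ) • outer ![(α : ℂ), (β : ℂ)]).mulVec x)
    = (((1 - p) * Complex.normSq (x 0) + Complex.normSq (x 1)
        - p * Complex.normSq ((α : ℂ) * x 0 + (β : ℂ) * x 1) : ℝ) : ℂ) := by
  apply Complex.ext <;>
    simp [outer, dotProduct, Matrix.mulVec, Fin.sum_univ_two, Matrix.sub_apply,
      Matrix.smul_apply, Matrix.one_apply, Complex.normSq_apply, Complex.add_re, Complex.add_im,
      Complex.mul_re, Complex.mul_im, Complex.sub_re, Complex.sub_im] <;>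
    ring

theorem stmt0 (α β p : ℝ) (hα0 : 0 ≤ α) (hα1 : α ≤ 1)
    (hβ : β = Real.sqrt (1 - α ^ 2)) (hp : 0 < p) :
    ((1 : Matrix (Fin 2) (Fin 2) ℂ) - (p : ℂ) • outer ![1, 0]
      - (p : ℂ) • outer ![(α : ℂ), (β : ℂ)]).PosSemidef ↔ p ≤ 1 / (1 + α) := by
  have hα1' : (0:ℝ) < 1 + α := by linarith
  have hβ0 : 0 ≤ β := hβ ▸ Real.sqrt_nonneg _
  have hβ2 : β ^ 2 = 1 - α ^ 2 := by
    rw [hβ, Real.sq_sqrt]; nlinarith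
  rw [Matrix.posSemidef_iff_dotProduct_mulVec]
  constructor
  · rintro ⟨-, h⟩
    set s : ℝ := Real.sqrt ((1 + α) / 2) with hs
    set t : ℝ := Real.sqrt ((1 - α) / 2) with ht
    have hs2 : s ^ 2 = (1 + α) / 2 := Real.sq_sqrt (by linarith)
    have ht2 : t ^ 2 = (1 - α) / 2 := Real.sq_sqrt (by linarith)
    have hst : s * t = β / 2 := by
      rw [hs, ht, ← Real.sqrt_mul (by linarith), hβ]
      rw [show (1 + α) / 2 * ((1 - α) / 2) = (1 - α ^ 2) / 4 by ring]
      rw [Real.sqrt_div (by nlinarith) 4, show Real.sqrt 4 = 2 by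
        rw [show (4:ℝ) = 2^2 by norm_num]; exact Real.sqrt_sq (by norm_num)]
    have key := h ![(s : ℂ), (t : ℂ)]
    rw [quad] at key
    simp only [Matrix.cons_val_zero, Matrix.cons_val_one, Matrix.head_cons] at key
    rw [show (α : ℂ) * (s : ℂ) + (β : ℂ) * (t : ℂ) = ((α * s + β * t : ℝ) : ℂ) by push_cast; ring,
      Complex.normSq_ofReal, Complex.normSq_ofReal, Complex.normSq_ofReal,
      Complex.zero_le_real] at key
    have e : (1 - p) * (s * s) + t * t - p * ((α * s + β * t) * (α * s + β * t))
        = 1 - p * (1 + α) := by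
      linear_combination (1-p-p*α^2)*hs2 + (1-p*β^2)*ht2 + (-2*p*α*β)*hst + (-p*(1+α)/2)*hβ2
    rw [le_div_iff₀ hα1']
    linarith [key, e]
  · intro hple
    have hple' : p * (1 + α) ≤ 1 := by
      rw [le_div_iff₀ hα1'] at hple; linarith
    constructor
    · unfold Matrix.IsHermitian
      ext i j
      fin_cases i <;> fin_cases j <;>
        simp [outer, Matrix.conjTranspose_apply, Matrix.one_apply, Complex.conj_ofReal,
          mul_comm]
    · intro x
      rw [quad, Complex.zero_le_real]
      set a := (x 0).re; set b := (x 0).im; set c := (x 1).re; set d := (x 1).im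
      have h0 : Complex.normSq (x 0) = a^2 + b^2 := by
        rw [Complex.normSq_apply]; ring
      have h1 : Complex.normSq (x 1) = c^2 + d^2 := by
        rw [Complex.normSq_apply]; ring
      have h2 : Complex.normSq ((α : ℂ) * x 0 + (β : ℂ) * x 1)
          = (α*a + β*c)^2 + (α*b + β*d)^2 := by
        simp [Complex.normSq_apply, Complex.add_re, Complex.add_im, Complex.mul_re,
          Complex.mul_im]
        ring
      rw [h0, h1, h2]
      have cert : (1+α) * ((1-p)*(a^2+b^2)+(c^2+d^2) - p*((α*a+β*c)^2+(α*b+β*d)^2))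
          = p*α*(β*a-(1+α)*c)^2 + p*α*(β*b-(1+α)*d)^2
            + (1+α)*(1-p*(1+α))*(a^2+b^2+c^2+d^2) := by
        linear_combination (-(1+α)*p*(c^2+d^2) - p*α*(a^2+b^2)) * hβ2
      have hT : 0 ≤ (1+α) * ((1-p)*(a^2+b^2)+(c^2+d^2) - p*((α*a+β*c)^2+(α*b+β*d)^2)) := by
        rw [cert]
        have := sub_nonneg.2 hple'
        positivity
      nlinarith [hT, hα1']
end

section
/- Let ρ_{AE} = (1/N)(|0⟩⟨0|_A ⊗ |E⟩⟨E| + |1⟩⟨1|_A ⊗ |F⟩⟨F|) be a classical-quantum state where |E⟩, |F⟩ are (possibly subnormalized) nonzero vectors with ‖E‖² + ‖F‖² = N. Then the conditional von Neumann entropy satisfies S(A|E)_ρ ≥ H(‖E‖²/N) − H(λ) where λ = (1/2)(1 + √((‖E‖²−‖F‖²)² + 4Re²⟨E,F⟩)/N) and H is the binary Shannon entropy. -/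
open Kronecker

/-- Binary Shannon entropy (base 2). -/
noncomputable def binEnt (x : ℝ) : ℝ :=
  -(x * Real.logb 2 x) - (1 - x) * Real.logb 2 (1 - x)

/-- von Neumann entropy (base 2) of a matrix, via eigenvalues (junk value `0` if
the matrix is not Hermitian). -/
noncomputable def vonNeumann {n : Type*} [Fintype n] [DecidableEq n]
    (ρ : Matrix n n ℂ) : ℝ := by
  classical exact
    if h : ρ.IsHermitian then
      -∑ i, h.eigenvalues i * Real.logb 2 (h.eigenvalues i)
    else 0

/-- Partial trace over the first (qubit) factor. -/
noncomputable def ptraceA {d : ℕ} (ρ : Matrix (Fin 2 × Fin d) (Fin 2 × Fin d) ℂ) :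
    Matrix (Fin d) (Fin d) ℂ :=
  Matrix.of fun i j => ∑ a : Fin 2, ρ (a, i) (a, j)

set_option linter.unusedSectionVars false
set_option maxHeartbeats 1000000

section Aux

variable {n : Type*} [Fintype n] [DecidableEq n]

lemma outer_isHermitian (v : n → ℂ) : (outer v).IsHermitian := by
  ext i j
  simp [outer, Matrix.conjTranspose_apply, mul_comm]

lemma outer_eq_col_mul_row (v : n → ℂ) :
    outer v = Matrix.replicateCol Unit v * Matrix.replicateRow Unit (star v) := by
  ext i j
  simp [outer, Matrix.mul_apply, Pi.star_apply]

lemma rank_outer_le_one (v : n → ℂ) : (outer v).rank ≤ 1 := by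
  rw [outer_eq_col_mul_row]
  exact (Matrix.rank_mul_le_right _ _).trans
    (by simpa using Matrix.rank_le_card_height (Matrix.replicateRow Unit (star v)))

lemma rank_outer_add_le_two (u v : n → ℂ) : (outer u + outer v).rank ≤ 2 := by
  have h : LinearMap.range ((outer u + outer v).mulVecLin) ≤
      LinearMap.range (outer u).mulVecLin ⊔ LinearMap.range (outer v).mulVecLin := by
    rintro x ⟨y, rfl⟩
    rw [Matrix.mulVecLin_add]
    exact Submodule.add_mem_sup (LinearMap.mem_range_self _ y) (LinearMap.mem_range_self _ y)
  calc (outer u + outer v).rank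
      ≤ Module.finrank ℂ (LinearMap.range (outer u).mulVecLin ⊔
          LinearMap.range (outer v).mulVecLin : Submodule ℂ (n → ℂ)) :=
        Submodule.finrank_mono h
    _ ≤ (outer u).rank + (outer v).rank :=
        Submodule.finrank_add_le_finrank_add_finrank _ _
    _ ≤ 1 + 1 := add_le_add (rank_outer_le_one u) (rank_outer_le_one v)

lemma trace_outer (v : n → ℂ) : (outer v).trace = ((∑ i, ‖v i‖ ^ 2 : ℝ) : ℂ) := by
  simp only [Matrix.trace, Matrix.diag, outer, Matrix.of_apply]
  push_cast
  refine Finset.sum_congr rfl fun i _ => ?_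
  rw [Complex.star_def, Complex.mul_conj']

lemma trace_outer_mul_outer (u v : n → ℂ) :
    (outer u * outer v).trace
      = ((Complex.normSq (∑ k, star (u k) * v k) : ℝ) : ℂ) := by
  have : (outer u * outer v).trace
      = (∑ k, star (u k) * v k) * (∑ i, star (v i) * u i) := by
    simp only [Matrix.trace, Matrix.diag, Matrix.mul_apply, outer, Matrix.of_apply,
      Finset.sum_mul, Finset.mul_sum]
    exact Finset.sum_congr rfl fun k _ => Finset.sum_congr rfl fun i _ => by ring
  rw [this]
  have h2 : (∑ i, star (v i) * u i) = star (∑ k, star (u k) * v k) := by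
    simp only [star_sum, star_mul, star_star]
  rw [h2, Complex.star_def, Complex.mul_conj]

lemma trace_outer_add (u v : n → ℂ) :
    (outer u + outer v).trace = ((∑ i, ‖u i‖ ^ 2 + ∑ i, ‖v i‖ ^ 2 : ℝ) : ℂ) := by
  rw [Matrix.trace_add, trace_outer, trace_outer]
  push_cast; ring

lemma sum_star_mul_self (u : n → ℂ) :
    ∑ k, star (u k) * u k = ((∑ i, ‖u i‖ ^ 2 : ℝ) : ℂ) := by
  push_cast
  refine Finset.sum_congr rfl fun i _ => ?_
  rw [Complex.star_def, Complex.conj_mul']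

lemma trace_sq_outer_add (u v : n → ℂ) :
    ((outer u + outer v) * (outer u + outer v)).trace
      = (((∑ i, ‖u i‖ ^ 2) ^ 2 + (∑ i, ‖v i‖ ^ 2) ^ 2
          + 2 * Complex.normSq (∑ k, star (u k) * v k) : ℝ) : ℂ) := by
  rw [add_mul, mul_add, mul_add, Matrix.trace_add, Matrix.trace_add, Matrix.trace_add,
    trace_outer_mul_outer, trace_outer_mul_outer, trace_outer_mul_outer, trace_outer_mul_outer]
  have hvu : (∑ k, star (v k) * u k) = star (∑ k, star (u k) * v k) := by
    simp only [star_sum, star_mul, star_star]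
  rw [hvu, sum_star_mul_self, sum_star_mul_self]
  rw [Complex.star_def, Complex.normSq_conj, Complex.normSq_ofReal, Complex.normSq_ofReal]
  push_cast; ring

lemma outer_kron {d : ℕ} (x : Fin 2 → ℂ) (w : Fin d → ℂ) :
    outer x ⊗ₖ outer w = outer (fun p : Fin 2 × Fin d => x p.1 * w p.2) := by
  ext ⟨a, i⟩ ⟨b, j⟩
  simp [outer, Matrix.kroneckerMap_apply]
  ring

lemma smul_outer (c : ℝ) (hc : 0 ≤ c) (w : n → ℂ) :
    ((c : ℝ) : ℂ) • outer w = outer (fun i => ((Real.sqrt c : ℝ) : ℂ) * w i) := by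
  ext i j
  simp only [outer, Matrix.smul_apply, Matrix.of_apply, smul_eq_mul, star_mul,
    Complex.star_def, Complex.conj_ofReal]
  have : ((Real.sqrt c : ℝ) : ℂ) * ((Real.sqrt c : ℝ) : ℂ) = (c : ℂ) := by
    norm_cast
    exact Real.mul_self_sqrt hc
  calc (c : ℂ) * (w i * star (w j)) = (((Real.sqrt c : ℝ) : ℂ) * ((Real.sqrt c : ℝ) : ℂ))
        * (w i * star (w j)) := by rw [this]
    _ = ((Real.sqrt c : ℝ) : ℂ) * w i * ((Real.sqrt c : ℝ) : ℂ) * star (w j) := by ring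
    _ = _ := by rw [Complex.star_def]; ring

lemma trace_eq_sum_eigs (M : Matrix n n ℂ) (hM : M.IsHermitian) :
    M.trace = ∑ i, ((hM.eigenvalues i : ℝ) : ℂ) := by
  set U : Matrix n n ℂ := (hM.eigenvectorUnitary : Matrix n n ℂ) with hU
  have hsp : star U * M * U = Matrix.diagonal (RCLike.ofReal ∘ hM.eigenvalues) := by
    have h := hM.conjStarAlgAut_star_eigenvectorUnitary
    rwa [Unitary.conjStarAlgAut_star_apply] at h
  have hUU : U * star U = 1 := Matrix.mem_unitaryGroup_iff.mp hM.eigenvectorUnitary.2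
  have h1 : M.trace = (star U * M * U).trace := by
    rw [Matrix.trace_mul_cycle, hUU, Matrix.one_mul]
  rw [h1, hsp, Matrix.trace_diagonal]
  rfl

lemma trace_sq_eq_sum_eigs_sq (M : Matrix n n ℂ) (hM : M.IsHermitian) :
    (M * M).trace = ∑ i, (((hM.eigenvalues i) ^ 2 : ℝ) : ℂ) := by
  set U : Matrix n n ℂ := (hM.eigenvectorUnitary : Matrix n n ℂ) with hU
  set D := Matrix.diagonal (RCLike.ofReal ∘ hM.eigenvalues : n → ℂ) with hD
  have hsp : star U * M * U = D := by
    have h := hM.conjStarAlgAut_star_eigenvectorUnitary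
    rwa [Unitary.conjStarAlgAut_star_apply] at h
  have hUU : U * star U = 1 := Matrix.mem_unitaryGroup_iff.mp hM.eigenvectorUnitary.2
  have key : D * D = star U * (M * M) * U := by
    rw [← hsp]
    calc (star U * M * U) * (star U * M * U)
        = star U * M * ((U * star U) * (M * U)) := by
          simp only [Matrix.mul_assoc]
      _ = star U * (M * M) * U := by rw [hUU, Matrix.one_mul]; simp only [Matrix.mul_assoc]
  have h1 : (M * M).trace = (D * D).trace := by
    rw [key, Matrix.trace_mul_cycle, ← Matrix.mul_assoc, hUU, Matrix.one_mul]
  rw [h1, hD, Matrix.diagonal_mul_diagonal, Matrix.trace_diagonal]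
  refine Finset.sum_congr rfl fun i _ => ?_
  simp [RCLike.ofReal, sq]

lemma binEnt_zero : binEnt 0 = 0 := by simp [binEnt]
lemma binEnt_one : binEnt 1 = 0 := by simp [binEnt]

lemma sum_entropy_eq (e : n → ℝ) (μ : ℝ)
    (hcard : Fintype.card {i // e i ≠ 0} ≤ 2)
    (h1 : ∑ i, e i = 1) (h2 : ∑ i, e i ^ 2 = μ ^ 2 + (1 - μ) ^ 2) :
    -∑ i, e i * Real.logb 2 (e i) = binEnt μ := by
  classical
  set S : Finset n := Finset.univ.filter (fun i => e i ≠ 0) with hS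
  have hmem : ∀ i, i ∈ S ↔ e i ≠ 0 := by
    intro i; simp [hS]
  have hz : ∀ i ∈ Finset.univ, i ∉ S → e i = 0 := by
    intro i _ hi
    by_contra h
    exact hi ((hmem i).mpr h)
  have hs1 : ∑ i ∈ S, e i = 1 := by
    rw [Finset.sum_subset (Finset.subset_univ S) (fun i hi hni => hz i hi hni)]
    exact h1
  have hs2 : ∑ i ∈ S, e i ^ 2 = μ ^ 2 + (1 - μ) ^ 2 := by
    rw [Finset.sum_subset (Finset.subset_univ S) (fun i hi hni => by rw [hz i hi hni]; ring)]
    exact h2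
  have hsE : ∑ i, e i * Real.logb 2 (e i) = ∑ i ∈ S, e i * Real.logb 2 (e i) := by
    rw [Finset.sum_subset (Finset.subset_univ S) (fun i hi hni => by rw [hz i hi hni]; ring)]
  have hcard' : S.card ≤ 2 := by
    rw [hS]
    simpa [Fintype.card_subtype] using hcard
  rw [hsE]
  interval_cases hc : S.card
  · rw [Finset.card_eq_zero.mp hc] at hs1
    simp at hs1
  · obtain ⟨i, hi⟩ := Finset.card_eq_one.mp hc
    rw [hi, Finset.sum_singleton] at hs1 hs2 ⊢
    have hμ : μ * (1 - μ) = 0 := by nlinarith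
    rcases mul_eq_zero.mp hμ with h | h
    · rw [h, binEnt_zero, hs1]
      simp
    · have : μ = 1 := by linarith
      rw [this, binEnt_one, hs1]
      simp
  · obtain ⟨i, j, hij, hSij⟩ := Finset.card_eq_two.mp hc
    rw [hSij, Finset.sum_pair hij] at hs1 hs2 ⊢
    have hprod : e i * e j = μ * (1 - μ) := by nlinarith
    have key : (e i - μ) * (e i - (1 - μ)) = 0 := by nlinarith
    rcases mul_eq_zero.mp key with h | h
    · have hei : e i = μ := by linarith
      have hej : e j = 1 - μ := by linarith
      rw [hei, hej, binEnt]
      ring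
    · have hei : e i = 1 - μ := by linarith
      have hej : e j = μ := by linarith
      rw [hei, hej, binEnt]
      ring

lemma vonNeumann_eq_binEnt (M : Matrix n n ℂ) (hM : M.IsHermitian) (hrank : M.rank ≤ 2) (μ : ℝ)
    (htr : M.trace = 1) (htr2 : (M * M).trace = ((μ ^ 2 + (1 - μ) ^ 2 : ℝ) : ℂ)) :
    vonNeumann M = binEnt μ := by
  have h1 : ∑ i, hM.eigenvalues i = 1 := by
    have h := (trace_eq_sum_eigs M hM).symm.trans htr
    have : ((∑ i, hM.eigenvalues i : ℝ) : ℂ) = ((1 : ℝ) : ℂ) := by push_cast; exact h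
    exact_mod_cast this
  have h2 : ∑ i, (hM.eigenvalues i) ^ 2 = μ ^ 2 + (1 - μ) ^ 2 := by
    have h := (trace_sq_eq_sum_eigs_sq M hM).symm.trans htr2
    have : ((∑ i, (hM.eigenvalues i) ^ 2 : ℝ) : ℂ) = ((μ ^ 2 + (1 - μ) ^ 2 : ℝ) : ℂ) := by
      push_cast at h ⊢; exact h
    exact_mod_cast this
  have hcard : Fintype.card {i // hM.eigenvalues i ≠ 0} ≤ 2 := by
    rw [← hM.rank_eq_card_non_zero_eigs]
    exact hrank
  rw [vonNeumann, dif_pos hM]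
  exact sum_entropy_eq hM.eigenvalues μ hcard h1 h2

lemma binEnt_eq (x : ℝ) : binEnt x = Real.binEntropy x / Real.log 2 := by
  simp only [binEnt, Real.binEntropy, Real.logb, Real.log_inv]
  ring

lemma binEnt_antitone {x y : ℝ} (hx : 1 / 2 ≤ x) (hxy : x ≤ y) (hy : y ≤ 1) :
    binEnt y ≤ binEnt x := by
  rw [binEnt_eq, binEnt_eq]
  have h2 : (0 : ℝ) < Real.log 2 := Real.log_pos (by norm_num)
  have hx' : x ∈ Set.Icc (2⁻¹ : ℝ) 1 := ⟨by linarith, by linarith⟩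
  have hy' : y ∈ Set.Icc (2⁻¹ : ℝ) 1 := ⟨by linarith, hy⟩
  have := Real.binEntropy_strictAntiOn.antitoneOn hx' hy' hxy
  gcongr

end Aux

theorem stmt6 {d : ℕ} (E F : EuclideanSpace ℂ (Fin d)) (hE : E ≠ 0) (hF : F ≠ 0)
    (N : ℝ) (hN : N = ‖E‖ ^ 2 + ‖F‖ ^ 2)
    (ρAE : Matrix (Fin 2 × Fin d) (Fin 2 × Fin d) ℂ)
    (hρ : ρAE = ((1 / N : ℝ) : ℂ) •
      (outer ![1, 0] ⊗ₖ outer (fun i => E i) + outer ![0, 1] ⊗ₖ outer (fun i => F i)))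
    (lam : ℝ)
    (hlam : lam = (1 / 2) * (1 + Real.sqrt ((‖E‖ ^ 2 - ‖F‖ ^ 2) ^ 2
        + 4 * ((inner ℂ E F : ℂ).re) ^ 2) / N)) :
    binEnt (‖E‖ ^ 2 / N) - binEnt lam ≤ vonNeumann ρAE - vonNeumann (ptraceA ρAE) := by
  classical
  have hEpos : 0 < ‖E‖ := norm_pos_iff.mpr hE
  have hFpos : 0 < ‖F‖ := norm_pos_iff.mpr hF
  have hNpos : 0 < N := by nlinarith
  have hNne : N ≠ 0 := ne_of_gt hNpos
  set r : ℝ := 1 / N with hrdef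
  have hr : 0 ≤ r := by positivity
  have hrpos : 0 < r := by positivity
  have hEsum : ∑ i, ‖E i‖ ^ 2 = ‖E‖ ^ 2 := by
    rw [EuclideanSpace.norm_eq, Real.sq_sqrt (by positivity)]
  have hFsum : ∑ i, ‖F i‖ ^ 2 = ‖F‖ ^ 2 := by
    rw [EuclideanSpace.norm_eq, Real.sq_sqrt (by positivity)]
  have hinner : (inner ℂ E F : ℂ) = ∑ i, star (E i) * F i := by
    rw [PiLp.inner_apply]
    exact Finset.sum_congr rfl fun i _ => RCLike.inner_apply' _ _
  set sN : ℂ := ((Real.sqrt r : ℝ) : ℂ) with hsN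
  set u : Fin 2 × Fin d → ℂ := fun p => sN * (![1, 0] p.1 * E p.2) with hu
  set v : Fin 2 × Fin d → ℂ := fun p => sN * (![0, 1] p.1 * F p.2) with hv
  have hρ2 : ρAE = outer u + outer v := by
    rw [hρ, outer_kron, outer_kron, smul_add, smul_outer r hr, smul_outer r hr]
  have hsNsq : sN * sN = ((r : ℝ) : ℂ) := by
    rw [hsN]; norm_cast; exact Real.mul_self_sqrt hr
  have hnormsN : ‖sN‖ ^ 2 = r := by
    rw [hsN, Complex.norm_real, Real.norm_eq_abs, abs_of_nonneg (Real.sqrt_nonneg r),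
      Real.sq_sqrt hr]
  -- sums for u, v
  have hau : ∑ p : Fin 2 × Fin d, ‖u p‖ ^ 2 = ‖E‖ ^ 2 / N := by
    rw [Fintype.sum_prod_type]
    simp only [hu, norm_mul, mul_pow, hnormsN, Fin.sum_univ_two]
    simp only [Matrix.cons_val_zero, Matrix.cons_val_one, Matrix.head_cons,
      norm_one, norm_zero, one_pow]
    rw [← Finset.mul_sum, ← Finset.mul_sum, hEsum]
    rw [hrdef]
    ring_nf
    simp
  have hbv : ∑ p : Fin 2 × Fin d, ‖v p‖ ^ 2 = ‖F‖ ^ 2 / N := by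
    rw [Fintype.sum_prod_type]
    simp only [hv, norm_mul, mul_pow, hnormsN, Fin.sum_univ_two]
    simp only [Matrix.cons_val_zero, Matrix.cons_val_one, Matrix.head_cons,
      norm_one, norm_zero, one_pow]
    rw [← Finset.mul_sum, ← Finset.mul_sum, hFsum]
    rw [hrdef]
    ring_nf
    rw [← Finset.mul_sum, hFsum]
  have hcuv : ∑ p : Fin 2 × Fin d, star (u p) * v p = 0 := by
    rw [Fintype.sum_prod_type]
    simp [hu, hv, Fin.sum_univ_two]
  have habN : ‖E‖ ^ 2 / N + ‖F‖ ^ 2 / N = 1 := by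
    field_simp [hN]
    linarith
  -- first von Neumann entropy
  have hvn1 : vonNeumann ρAE = binEnt (‖E‖ ^ 2 / N) := by
    rw [hρ2]
    refine vonNeumann_eq_binEnt _ ((outer_isHermitian u).add (outer_isHermitian v))
      (rank_outer_add_le_two u v) _ ?_ ?_
    · rw [trace_outer_add, hau, hbv, habN]
      norm_num
    · rw [trace_sq_outer_add, hau, hbv, hcuv]
      norm_cast
      rw [Complex.normSq_zero]
      have : 1 - ‖E‖ ^ 2 / N = ‖F‖ ^ 2 / N := by linarith
      rw [this]
      ring
  -- partial trace
  have hpt : ptraceA ρAE = outer (fun i => sN * E i) + outer (fun i => sN * F i) := by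
    rw [hρ2]
    ext i j
    simp only [ptraceA, Matrix.of_apply, Matrix.add_apply, outer, hu, hv, Fin.sum_univ_two,
      Matrix.cons_val_zero, Matrix.cons_val_one, Matrix.head_cons]
    ring
  have hau' : ∑ i, ‖sN * E i‖ ^ 2 = ‖E‖ ^ 2 / N := by
    simp only [norm_mul, mul_pow, hnormsN]
    rw [← Finset.mul_sum, hEsum, hrdef]
    ring
  have hbv' : ∑ i, ‖sN * F i‖ ^ 2 = ‖F‖ ^ 2 / N := by
    simp only [norm_mul, mul_pow, hnormsN]
    rw [← Finset.mul_sum, hFsum, hrdef]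
    ring
  have hc' : ∑ k, star (sN * E k) * (sN * F k) = ((r : ℝ) : ℂ) * (inner ℂ E F : ℂ) := by
    rw [hinner, Finset.mul_sum]
    refine Finset.sum_congr rfl fun k _ => ?_
    rw [star_mul]
    have : star sN = sN := by rw [hsN, Complex.star_def, Complex.conj_ofReal]
    rw [this, ← hsNsq]
    ring
  set q : ℝ := Complex.normSq (inner ℂ E F : ℂ) with hq
  have hq0 : 0 ≤ q := Complex.normSq_nonneg _
  set Δ : ℝ := (‖E‖ ^ 2 - ‖F‖ ^ 2) ^ 2 + 4 * q with hΔ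
  have hΔ0 : 0 ≤ Δ := by positivity
  set s : ℝ := Real.sqrt Δ with hs
  have hs0 : 0 ≤ s := Real.sqrt_nonneg _
  have hssq : s ^ 2 = Δ := Real.sq_sqrt hΔ0
  set μact : ℝ := (1 + s / N) / 2 with hμact
  -- Cauchy-Schwarz: q ≤ ‖E‖² ‖F‖²
  have hCS : q ≤ ‖E‖ ^ 2 * ‖F‖ ^ 2 := by
    have h1 : ‖(inner ℂ E F : ℂ)‖ ≤ ‖E‖ * ‖F‖ := norm_inner_le_norm E F
    have h2 : q = ‖(inner ℂ E F : ℂ)‖ ^ 2 := by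
      rw [hq, Complex.normSq_eq_norm_sq]
    nlinarith [norm_nonneg (inner ℂ E F : ℂ)]
  have hsleN : s ≤ N := by
    have : Δ ≤ N ^ 2 := by rw [hΔ, hN]; nlinarith
    calc s = Real.sqrt Δ := hs
      _ ≤ Real.sqrt (N ^ 2) := Real.sqrt_le_sqrt this
      _ = N := by rw [Real.sqrt_sq hNpos.le]
  have hvn2 : vonNeumann (ptraceA ρAE) = binEnt μact := by
    rw [hpt]
    refine vonNeumann_eq_binEnt _ ((outer_isHermitian _).add (outer_isHermitian _))
      (rank_outer_add_le_two _ _) _ ?_ ?_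
    · rw [trace_outer_add, hau', hbv', habN]
      norm_num
    · rw [trace_sq_outer_add, hau', hbv', hc']
      norm_cast
      rw [Complex.normSq_mul, Complex.normSq_ofReal, ← hq]
      have hrval : r * r = 1 / N ^ 2 := by rw [hrdef]; field_simp
      have hgoal : (‖E‖ ^ 2 / N) ^ 2 + (‖F‖ ^ 2 / N) ^ 2 + 2 * (r * r * q)
          = μact ^ 2 + (1 - μact) ^ 2 := by
        rw [hrval, hμact]
        have h2 : ((1 + s / N) / 2) ^ 2 + (1 - (1 + s / N) / 2) ^ 2
            = (N ^ 2 + s ^ 2) / (2 * N ^ 2) := by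
          field_simp
          ring
        rw [h2, hssq, hΔ, hN]
        field_simp
        ring
      exact_mod_cast hgoal
  rw [hvn1, hvn2]
  have hkey : binEnt μact ≤ binEnt lam := by
    refine binEnt_antitone ?_ ?_ ?_
    · rw [hlam]
      have : 0 ≤ Real.sqrt ((‖E‖ ^ 2 - ‖F‖ ^ 2) ^ 2 + 4 * ((inner ℂ E F : ℂ).re) ^ 2) / N := by
        positivity
      linarith
    · rw [hlam, hμact]
      have hle : (‖E‖ ^ 2 - ‖F‖ ^ 2) ^ 2 + 4 * ((inner ℂ E F : ℂ).re) ^ 2 ≤ Δ := by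
        rw [hΔ, hq, Complex.normSq_apply]
        nlinarith [sq_nonneg (inner ℂ E F : ℂ).im]
      have := Real.sqrt_le_sqrt hle
      rw [← hs] at this
      have hdiv : Real.sqrt ((‖E‖ ^ 2 - ‖F‖ ^ 2) ^ 2 + 4 * ((inner ℂ E F : ℂ).re) ^ 2) / N
          ≤ s / N := by
        gcongr
      linarith
    · rw [hμact]
      have : s / N ≤ 1 := (div_le_one hNpos).mpr hsleN
      linarith
  linarith
end
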